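/- Correctness of the at-least-k-successors formula: let φ be a QCTL formula, k ≥ 1, and P = {p_1,…,p_k} atomic propositions not occurring in φ; then for every Kripke structure K and state x, K,x ⊨ ∃P.( ⋀_{1≤i≤k} EX( p_i ∧ ⋀_{i'≠i} ¬p_{i'} ) ∧ AX( (⋁_{1≤i≤k} p_i) → φ ) ) if and only if x has at least k distinct E-successors satisfying φ. -/

import Mathlib

open Classical

/-- Syntax of QCTL: `φ ::= q | ¬φ | φ∨ψ | EX φ | E φ U ψ | A φ U ψ | ∃p.φ`. -/
inductive QCTL (AP : Type) : Type where
  | atom : AP → QCTL AP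
  | qneg : QCTL AP → QCTL AP
  | qor  : QCTL AP → QCTL AP → QCTL AP
  | qEX  : QCTL AP → QCTL AP
  | qEU  : QCTL AP → QCTL AP → QCTL AP
  | qAU  : QCTL AP → QCTL AP → QCTL AP
  | qexi : AP → QCTL AP → QCTL AP

/-- A Kripke structure over atomic propositions `AP` with (finite) state space `V`:
a serial edge relation and a labelling function. -/
structure Kripke (AP V : Type) where
  E : V → V → Prop
  serial : ∀ v, ∃ w, E v w
  label : V → Set AP

variable {AP V : Type}

/-- `K'` agrees with `K` (same edges) except possibly on the labelling of `p`. -/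
def Kripke.AgreeExcept (K K' : Kripke AP V) (p : AP) : Prop :=
  K'.E = K.E ∧ ∀ v q, q ≠ p → (q ∈ K'.label v ↔ q ∈ K.label v)

/-- Structure semantics of QCTL. -/
def QCTL.sat : QCTL AP → Kripke AP V → V → Prop
  | .atom p, K, x => p ∈ K.label x
  | .qneg φ, K, x => ¬ φ.sat K x
  | .qor φ ψ, K, x => φ.sat K x ∨ ψ.sat K x
  | .qEX φ, K, x => ∃ y, K.E x y ∧ φ.sat K y
  | .qEU φ ψ, K, x => ∃ ρ : ℕ → V, ρ 0 = x ∧ (∀ i, K.E (ρ i) (ρ (i + 1))) ∧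
      ∃ i, ψ.sat K (ρ i) ∧ ∀ j < i, φ.sat K (ρ j)
  | .qAU φ ψ, K, x => ∀ ρ : ℕ → V, ρ 0 = x → (∀ i, K.E (ρ i) (ρ (i + 1))) →
      ∃ i, ψ.sat K (ρ i) ∧ ∀ j < i, φ.sat K (ρ j)
  | .qexi p φ, K, x => ∃ K' : Kripke AP V, K.AgreeExcept K' p ∧ φ.sat K' x

namespace QCTL

def qand (φ ψ : QCTL AP) : QCTL AP := qneg (qor (qneg φ) (qneg ψ))
def qimp (φ ψ : QCTL AP) : QCTL AP := qor (qneg φ) ψ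
def qiff (φ ψ : QCTL AP) : QCTL AP := qand (qimp φ ψ) (qimp ψ φ)
def qtop [Inhabited AP] : QCTL AP := qor (atom default) (qneg (atom default))
def qbot [Inhabited AP] : QCTL AP := qneg qtop
def qAX (φ : QCTL AP) : QCTL AP := qneg (qEX (qneg φ))
def qEF [Inhabited AP] (φ : QCTL AP) : QCTL AP := qEU qtop φ
def qAG [Inhabited AP] (φ : QCTL AP) : QCTL AP := qneg (qEF (qneg φ))
def qall (p : AP) (φ : QCTL AP) : QCTL AP := qneg (qexi p (qneg φ))

/-- All atomic propositions occurring in a formula (free or bound). -/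
def atoms : QCTL AP → Set AP
  | atom p => {p}
  | qneg φ => φ.atoms
  | qor φ ψ => φ.atoms ∪ ψ.atoms
  | qEX φ => φ.atoms
  | qEU φ ψ => φ.atoms ∪ ψ.atoms
  | qAU φ ψ => φ.atoms ∪ ψ.atoms
  | qexi p φ => insert p φ.atoms

/-- Size of a formula. -/
def qsize : QCTL AP → ℕ
  | atom _ => 1
  | qneg φ => φ.qsize + 1
  | qor φ ψ => φ.qsize + ψ.qsize + 1
  | qEX φ => φ.qsize + 1
  | qEU φ ψ => φ.qsize + ψ.qsize + 1
  | qAU φ ψ => φ.qsize + ψ.qsize + 1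
  | qexi _ φ => φ.qsize + 1

end QCTL

/-- Equivalence of two QCTL formulas: same truth value at every state of every
(finite) Kripke structure. -/
def QEquiv (φ ψ : QCTL AP) : Prop :=
  ∀ (V : Type) [Fintype V] (K : Kripke AP V) (x : V), φ.sat K x ↔ ψ.sat K x

/-- `∃p₁.…∃pₙ.φ` for a list of atomic propositions. -/
def exiMany {AP : Type} (l : List AP) (φ : QCTL AP) : QCTL AP := l.foldr QCTL.qexi φ

/-- Conjunction of a list of formulas, with a final base conjunct. -/
def conjList {AP : Type} (l : List (QCTL AP)) (base : QCTL AP) : QCTL AP :=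
  l.foldr QCTL.qand base

/-- Disjunction of a list of formulas, with a final base disjunct. -/
def disjList {AP : Type} (l : List (QCTL AP)) (base : QCTL AP) : QCTL AP :=
  l.foldr QCTL.qor base

section Helpers

variable {AP V : Type}

theorem sat_qand (φ ψ : QCTL AP) (K : Kripke AP V) (x : V) :
    (QCTL.qand φ ψ).sat K x ↔ φ.sat K x ∧ ψ.sat K x := by
  simp [QCTL.qand, QCTL.sat]

theorem sat_qimp (φ ψ : QCTL AP) (K : Kripke AP V) (x : V) :
    (QCTL.qimp φ ψ).sat K x ↔ (φ.sat K x → ψ.sat K x) := by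
  simp [QCTL.qimp, QCTL.sat]; tauto

theorem sat_qbot [Inhabited AP] (K : Kripke AP V) (x : V) :
    ¬ (QCTL.qbot : QCTL AP).sat K x := by
  simp [QCTL.qbot, QCTL.qtop, QCTL.sat]

theorem sat_qAX (φ : QCTL AP) (K : Kripke AP V) (x : V) :
    (QCTL.qAX φ).sat K x ↔ ∀ y, K.E x y → φ.sat K y := by
  simp [QCTL.qAX, QCTL.sat]

theorem sat_conjList (l : List (QCTL AP)) (b : QCTL AP) (K : Kripke AP V) (x : V) :
    (conjList l b).sat K x ↔ (∀ ψ ∈ l, ψ.sat K x) ∧ b.sat K x := by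
  induction l with
  | nil => simp [conjList]
  | cons a l ih =>
      show (QCTL.qand a _).sat K x ↔ _
      rw [sat_qand, show (List.foldr QCTL.qand b l) = conjList l b from rfl, ih]
      simp only [List.mem_cons]
      constructor
      · rintro ⟨h1, h2, h3⟩
        exact ⟨fun ψ h => h.elim (fun e => e ▸ h1) (h2 ψ), h3⟩
      · rintro ⟨h1, h3⟩
        exact ⟨h1 a (Or.inl rfl), fun ψ h => h1 ψ (Or.inr h), h3⟩

theorem sat_disjList [Inhabited AP] (l : List (QCTL AP)) (K : Kripke AP V) (x : V) :
    (disjList l QCTL.qbot).sat K x ↔ ∃ ψ ∈ l, ψ.sat K x := by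
  induction l with
  | nil => simp [disjList]; exact sat_qbot K x
  | cons a l ih =>
      simp only [disjList, List.foldr] at *
      show a.sat K x ∨ _ ↔ _
      rw [ih]; simp

/-- Satisfaction only depends on edges and the labelling of atoms occurring in the formula. -/
theorem sat_congr (φ : QCTL AP) : ∀ (K K' : Kripke AP V) (x : V), K'.E = K.E →
    (∀ v q, q ∈ φ.atoms → (q ∈ K'.label v ↔ q ∈ K.label v)) →
    (φ.sat K' x ↔ φ.sat K x) := by
  induction φ with
  | atom q => intro K K' x hE hl; exact hl x q rfl
  | qneg φ ih =>
      intro K K' x hE hl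
      exact not_congr (ih K K' x hE hl)
  | qor φ ψ ihφ ihψ =>
      intro K K' x hE hl
      exact or_congr (ihφ K K' x hE (fun v q hq => hl v q (Or.inl hq)))
        (ihψ K K' x hE (fun v q hq => hl v q (Or.inr hq)))
  | qEX φ ih =>
      intro K K' x hE hl
      show (∃ y, K'.E x y ∧ _) ↔ (∃ y, K.E x y ∧ _)
      rw [hE]
      exact exists_congr fun y => and_congr_right fun _ => ih K K' y hE hl
  | qEU φ ψ ihφ ihψ =>
      intro K K' x hE hl
      simp only [QCTL.sat]
      rw [hE]
      refine exists_congr fun ρ => and_congr_right fun _ => and_congr_right fun _ =>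
        exists_congr fun i => and_congr ?_ ?_
      · exact ihψ K K' (ρ i) hE (fun v q hq => hl v q (Or.inr hq))
      · exact forall_congr' fun j => forall_congr' fun _ =>
          ihφ K K' (ρ j) hE (fun v q hq => hl v q (Or.inl hq))
  | qAU φ ψ ihφ ihψ =>
      intro K K' x hE hl
      simp only [QCTL.sat]
      rw [hE]
      refine forall_congr' fun ρ => forall_congr' fun _ => forall_congr' fun _ =>
        exists_congr fun i => and_congr ?_ ?_
      · exact ihψ K K' (ρ i) hE (fun v q hq => hl v q (Or.inr hq))
      · exact forall_congr' fun j => forall_congr' fun _ =>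
          ihφ K K' (ρ j) hE (fun v q hq => hl v q (Or.inl hq))
  | qexi p ψ ih =>
      intro K K' x hE hl
      have key : ∀ (A B : Kripke AP V), B.E = A.E →
          (∀ v q, q ∈ (QCTL.qexi p ψ).atoms → (q ∈ B.label v ↔ q ∈ A.label v)) →
          (QCTL.qexi p ψ).sat A x → (QCTL.qexi p ψ).sat B x := by
        rintro A B hBA hlab ⟨K1, ⟨hE1, hl1⟩, hsat⟩
        refine ⟨⟨B.E, B.serial,
          fun v => {q | ((q = p ∨ q ∈ ψ.atoms) ∧ q ∈ K1.label v) ∨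
            (¬(q = p ∨ q ∈ ψ.atoms) ∧ q ∈ B.label v)}⟩, ⟨rfl, ?_⟩, ?_⟩
        · intro v q hq
          show (_ ∨ _) ↔ _
          by_cases hmem : q = p ∨ q ∈ ψ.atoms
          · rcases hmem with h | h
            · exact absurd h hq
            · constructor
              · rintro (⟨_, h1⟩ | ⟨h1, _⟩)
                · exact (hlab v q (Or.inr h)).mpr ((hl1 v q hq).mp h1)
                · exact absurd (Or.inr h) h1
              · intro h1
                exact Or.inl ⟨Or.inr h, (hl1 v q hq).mpr ((hlab v q (Or.inr h)).mp h1)⟩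
          · constructor
            · rintro (⟨h1, _⟩ | ⟨_, h1⟩)
              · exact absurd h1 hmem
              · exact h1
            · intro h1; exact Or.inr ⟨hmem, h1⟩
        · refine (ih K1 _ x ?_ ?_).mpr hsat
          · show B.E = K1.E; rw [hBA, hE1]
          · intro v q hq
            show (_ ∨ _) ↔ _
            constructor
            · rintro (⟨_, h1⟩ | ⟨h1, _⟩)
              · exact h1
              · exact absurd (Or.inr hq) h1
            · intro h1; exact Or.inl ⟨Or.inr hq, h1⟩
      constructor
      · exact key K' K hE.symm (fun v q hq => (hl v q hq).symm)
      · exact key K K' hE hl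

/-- Semantics of a block of existential quantifiers. -/
theorem exiMany_sat (l : List AP) (ψ : QCTL AP) : ∀ (K : Kripke AP V) (x : V),
    (exiMany l ψ).sat K x ↔ ∃ K' : Kripke AP V, K'.E = K.E ∧
      (∀ v q, q ∉ l → (q ∈ K'.label v ↔ q ∈ K.label v)) ∧ ψ.sat K' x := by
  induction l with
  | nil =>
      intro K x
      constructor
      · intro h; exact ⟨K, rfl, fun v q _ => Iff.rfl, h⟩
      · rintro ⟨K', hE, hl, hs⟩
        exact (sat_congr ψ K K' x hE (fun v q _ => hl v q (by simp))).mp hs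
  | cons a l ih =>
      intro K x
      show (∃ K1, K.AgreeExcept K1 a ∧ (exiMany l ψ).sat K1 x) ↔ _
      constructor
      · rintro ⟨K1, ⟨hE1, hl1⟩, hs⟩
        obtain ⟨K', hE, hl, hs'⟩ := (ih K1 x).mp hs
        refine ⟨K', by rw [hE, hE1], ?_, hs'⟩
        intro v q hq
        have hqa : q ≠ a := fun h => hq (h ▸ (List.mem_cons_self : a ∈ a :: l))
        have hql : q ∉ l := fun h => hq (List.mem_cons_of_mem a h)
        exact (hl v q hql).trans (hl1 v q hqa)
      · rintro ⟨K', hE, hl, hs⟩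
        set K1 : Kripke AP V := ⟨K.E, K.serial,
          fun v => {q | (q = a ∧ q ∈ K'.label v) ∨ (q ≠ a ∧ q ∈ K.label v)}⟩ with hK1
        refine ⟨K1, ⟨rfl, ?_⟩, (ih K1 x).mpr ⟨K', hE, ?_, hs⟩⟩
        · intro v q hq
          show (_ ∨ _) ↔ _
          constructor
          · rintro (⟨h1, _⟩ | ⟨_, h1⟩)
            · exact absurd h1 hq
            · exact h1
          · intro h1; exact Or.inr ⟨hq, h1⟩
        · intro v q hq
          show _ ↔ (_ ∨ _)
          by_cases hqa : q = a
          · constructor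
            · intro h1; exact Or.inl ⟨hqa, h1⟩
            · rintro (⟨_, h1⟩ | ⟨h1, _⟩)
              · exact h1
              · exact absurd hqa h1
          · have hql : q ∉ a :: l := by
              intro h; rcases List.mem_cons.mp h with h | h
              · exact hqa h
              · exact hq h
            constructor
            · intro h1; exact Or.inr ⟨hqa, (hl v q hql).mp h1⟩
            · rintro (⟨h1, _⟩ | ⟨_, h1⟩)
              · exact absurd h1 hqa
              · exact (hl v q hql).mpr h1

end Helpers

/-- Correctness of the at-least-`k`-successors formula
`E_{≥k}X φ := ∃p₁…pₖ.( ⋀ᵢ EX(pᵢ ∧ ⋀_{i'≠i}¬p_{i'}) ∧ AX((⋁ᵢ pᵢ) → φ) )`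
(for distinct `p₁,…,pₖ` not occurring in `φ`): it holds at `x` iff `x` has at
least `k` distinct `E`-successors satisfying `φ`. -/
theorem atLeastK_X_correct {AP V : Type} [Inhabited AP] [Fintype V]
    (K : Kripke AP V) (x : V) (φ : QCTL AP) (k : ℕ) (hk : 1 ≤ k)
    (p : Fin k → AP) (hinj : Function.Injective p) (hfresh : ∀ i, p i ∉ φ.atoms) :
    (exiMany ((List.finRange k).map p)
      (conjList
        ((List.finRange k).map fun i =>
          QCTL.qEX (conjList
            (((List.finRange k).filter (fun j => decide (j ≠ i))).map
              fun j => QCTL.qneg (QCTL.atom (p j)))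
            (QCTL.atom (p i))))
        (QCTL.qAX (QCTL.qimp
          (disjList ((List.finRange k).map fun i => QCTL.atom (p i)) QCTL.qbot)
          φ)))).sat K x ↔
      (∃ f : Fin k → V, Function.Injective f ∧ ∀ i, K.E x (f i) ∧ φ.sat K (f i)) := by
  rw [exiMany_sat]
  have hmemL : ∀ q : AP, q ∈ (List.finRange k).map p ↔ ∃ i, p i = q := by
    intro q
    simp [List.mem_map]
  constructor
  · rintro ⟨K', hE, hl, hs⟩
    have hfreshlab : ∀ v q, q ∈ φ.atoms → (q ∈ K'.label v ↔ q ∈ K.label v) := by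
      intro v q hq
      refine hl v q fun hmem => ?_
      obtain ⟨i, rfl⟩ := (hmemL q).mp hmem
      exact hfresh i hq
    rw [sat_conjList] at hs
    obtain ⟨hEX, hAX⟩ := hs
    have hpick : ∀ i : Fin k, ∃ y, K.E x y ∧ p i ∈ K'.label y ∧
        ∀ j, j ≠ i → p j ∉ K'.label y := by
      intro i
      have h1 := hEX _ (List.mem_map.mpr ⟨i, List.mem_finRange i, rfl⟩)
      obtain ⟨y, hy, hsat⟩ := h1
      rw [sat_conjList] at hsat
      obtain ⟨hnegs, hatom⟩ := hsat
      refine ⟨y, hE ▸ hy, hatom, ?_⟩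
      intro j hj
      exact hnegs _ (List.mem_map.mpr ⟨j,
        List.mem_filter.mpr ⟨List.mem_finRange j, by simp [hj]⟩, rfl⟩)
    choose f hfE hfmem hfnot using hpick
    refine ⟨f, ?_, fun i => ⟨hfE i, ?_⟩⟩
    · intro i j hij
      by_contra hne
      exact hfnot j i hne (hij ▸ hfmem i)
    · rw [sat_qAX] at hAX
      have h2 := hAX (f i) (by rw [hE]; exact hfE i)
      rw [sat_qimp] at h2
      have h3 := h2 (by
        rw [sat_disjList]
        exact ⟨QCTL.atom (p i), List.mem_map.mpr ⟨i, List.mem_finRange i, rfl⟩, hfmem i⟩)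
      exact (sat_congr φ K K' (f i) hE hfreshlab).mp h3
  · rintro ⟨f, hfinj, hf⟩
    refine ⟨⟨K.E, K.serial,
      fun v => {q | (q ∈ K.label v ∧ ∀ i, p i ≠ q) ∨ (∃ i, q = p i ∧ v = f i)}⟩,
      rfl, ?_, ?_⟩
    · intro v q hq
      have hnp : ∀ i, p i ≠ q := fun i h => hq ((hmemL q).mpr ⟨i, h⟩)
      show (_ ∨ _) ↔ _
      constructor
      · rintro (⟨h, _⟩ | ⟨i, h1, _⟩)
        · exact h
        · exact absurd h1.symm (hnp i)
      · intro h; exact Or.inl ⟨h, hnp⟩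
    · rw [sat_conjList]
      constructor
      · intro ψ hψ
        obtain ⟨i, -, rfl⟩ := List.mem_map.mp hψ
        refine ⟨f i, (hf i).1, ?_⟩
        rw [sat_conjList]
        constructor
        · intro ψ hψ'
          obtain ⟨j, hjmem, rfl⟩ := List.mem_map.mp hψ'
          have hji : j ≠ i := by
            have := (List.mem_filter.mp hjmem).2
            simpa using this
          show ¬ ((p j ∈ K.label (f i) ∧ ∀ i', p i' ≠ p j) ∨ (∃ i', p j = p i' ∧ f i = f i'))
          rintro (⟨-, hnp⟩ | ⟨i', h1, h2⟩)
          · exact hnp j rfl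
          · have h3 : i' = j := hinj h1.symm
            subst h3
            exact hji (hfinj h2).symm
        · show (p i ∈ K.label (f i) ∧ _) ∨ _
          exact Or.inr ⟨i, rfl, rfl⟩
      · rw [sat_qAX]
        intro y hy
        rw [sat_qimp, sat_disjList]
        rintro ⟨ψ, hψ, hsat⟩
        obtain ⟨i, -, rfl⟩ := List.mem_map.mp hψ
        have hsat' : (p i ∈ K.label y ∧ ∀ i', p i' ≠ p i) ∨ (∃ i', p i = p i' ∧ y = f i') := hsat
        rcases hsat' with ⟨-, hnp⟩ | ⟨i', -, rfl⟩
        · exact absurd rfl (hnp i)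
        · refine (sat_congr φ K ⟨K.E, K.serial,
            fun v => {q | (q ∈ K.label v ∧ ∀ i, p i ≠ q) ∨ (∃ i, q = p i ∧ v = f i)}⟩
            (f i') rfl ?_).mpr (hf i').2
          intro v q hq
          have hnp : ∀ j, p j ≠ q := fun j h => hfresh j (h ▸ hq)
          show (_ ∨ _) ↔ _
          constructor
          · rintro (⟨h, -⟩ | ⟨j, h1, -⟩)
            · exact h
            · exact absurd h1.symm (hnp j)
          · intro h; exact Or.inl ⟨h, hnp⟩
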